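/- In the AMF framework, for any η ≤ 1/(2C): at every round t, given any history of play through round t−1, there exists x^t ∈ X^t such that for all y ∈ Y^t, Σ_{j∈[d]} exp(η·R^{t−1}_j)·( ℓ^t_j(x^t, y) − w^t_A ) ≤ 0. Consequently, a Learner who plays such a point at every round guarantees, against any choices y^1 ∈ Y^1, …, y^T ∈ Y^T of the Adversary, that the final surrogate loss satisfies L^T ≤ d·(4η²C² + 1)^T. -/

import Mathlib

open scoped BigOperators

noncomputable section

/-- Finite-dimensional Euclidean space. -/
abbrev Euc (n : ℕ) := EuclideanSpace ℝ (Fin n)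

/-- The Adversary-Moves-First value of an environment `(X, Y, ℓ)`:
`w_A = sup_{y ∈ Y} inf_{x ∈ X} max_{j} ℓ_j(x, y)`. -/
noncomputable def amfValue {N M d : ℕ} (X : Set (Euc N)) (Y : Set (Euc M))
    (ℓ : Euc N → Euc M → Fin d → ℝ) : ℝ :=
  sSup ((fun y => sInf ((fun x => ⨆ j, ℓ x y j) '' X)) '' Y)

/-- The AMF regret of coordinate `j` accumulated over the rounds in `S`:
`Σ_{s ∈ S} ℓ^s_j(x^s, y^s) − Σ_{s ∈ S} w^s_A`. -/
noncomputable def amfRegret {T d N M : ℕ} (X : Fin T → Set (Euc N)) (Y : Fin T → Set (Euc M))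
    (ℓ : Fin T → Euc N → Euc M → Fin d → ℝ)
    (x : Fin T → Euc N) (y : Fin T → Euc M) (S : Finset (Fin T)) (j : Fin d) : ℝ :=
  (∑ s ∈ S, ℓ s (x s) (y s) j) - ∑ s ∈ S, amfValue (X s) (Y s) (ℓ s)


lemma continuousOn_finset_sup' {α : Type*} [TopologicalSpace α] {ι : Type*} {X : Set α}
    (u : Finset ι) (hu : u.Nonempty) (g : ι → α → ℝ)
    (h : ∀ i ∈ u, ContinuousOn (g i) X) :
    ContinuousOn (fun x => u.sup' hu fun i => g i x) X := by
  induction hu using Finset.Nonempty.cons_induction with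
  | singleton i =>
      exact (h i (by simp)).congr fun x _ => Finset.sup'_singleton _
  | cons i s hi hs ih =>
      exact ((h i (by simp)).sup (ih fun j hj => h j (by simp [hj]))).congr
        fun x _ => Finset.sup'_cons hs _

lemma convexOn_finset_sum {E : Type*} [AddCommGroup E] [Module ℝ E] {X : Set E}
    (hX : Convex ℝ X) {ι : Type*} (u : Finset ι)
    (g : ι → E → ℝ) (h : ∀ i ∈ u, ConvexOn ℝ X (g i)) :
    ConvexOn ℝ X (fun x => ∑ i ∈ u, g i x) := by
  classical
  induction u using Finset.induction with
  | empty => simpa using convexOn_const 0 hX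
  | insert _ _ hi ih =>
      simp only [Finset.sum_insert hi]
      exact (h _ (by simp)).add (ih fun j hj => h j (by simp [hj]))

lemma sep_minimax {E : Type*} [NormedAddCommGroup E] [NormedSpace ℝ E]
    {ι : Type*} (u : Finset ι) (hu : u.Nonempty)
    {X : Set E} (hXconv : Convex ℝ X) (hXcomp : IsCompact X) (hXne : X.Nonempty)
    (g : ι → E → ℝ) (hgconv : ∀ i ∈ u, ConvexOn ℝ X (g i))
    (hgcont : ∀ i ∈ u, ContinuousOn (g i) X)
    (v' : ℝ)
    (key : ∀ μ : ι → ℝ, (∀ i ∈ u, 0 ≤ μ i) → (∑ i ∈ u, μ i) = 1 →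
      ∃ x ∈ X, ∑ i ∈ u, μ i * g i x ≤ v') :
    ∃ x ∈ X, ∀ i ∈ u, g i x ≤ v' := by
  classical
  have hune : Nonempty ↥u := ⟨⟨hu.choose, hu.choose_spec⟩⟩
  -- minimize the max over X
  obtain ⟨xb, hxbX, hxbmin⟩ := hXcomp.exists_isMinOn hXne
    (continuousOn_finset_sup' u hu g hgcont)
  set F : E → ℝ := fun x => u.sup' hu fun i => g i x with hF
  set v : ℝ := F xb with hv
  refine ⟨xb, hxbX, fun i hi => ?_⟩
  have hle : g i xb ≤ v := Finset.le_sup' (fun j => g j xb) hi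
  suffices hvv : v ≤ v' by linarith
  by_contra hvv
  push_neg at hvv
  -- separation in the space ↥u → ℝ
  set O : Set (↥u → ℝ) := Set.univ.pi fun _ => Set.Iio v with hO
  set S : Set (↥u → ℝ) := {z | ∃ x ∈ X, ∀ i : ↥u, g i x ≤ z i} with hS
  have hOopen : IsOpen O := isOpen_set_pi Set.finite_univ fun _ _ => isOpen_Iio
  have hOconv : Convex ℝ O := convex_pi fun _ _ => convex_Iio v
  have hSconv : Convex ℝ S := by
    rintro z1 ⟨x1, hx1, hz1⟩ z2 ⟨x2, hx2, hz2⟩ a b ha hb hab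
    refine ⟨a • x1 + b • x2, hXconv hx1 hx2 ha hb hab, fun i => ?_⟩
    calc g i (a • x1 + b • x2) ≤ a * g i x1 + b * g i x2 :=
          (hgconv i i.2).2 hx1 hx2 ha hb hab
      _ ≤ a * z1 i + b * z2 i := by
          have := hz1 i; have := hz2 i
          nlinarith
  have hdisj : Disjoint O S := by
    rw [Set.disjoint_left]
    rintro z hzO ⟨x, hxX, hzS⟩
    have hFx : F x < v := by
      rw [hF]
      rw [Finset.sup'_lt_iff]
      intro i hiu
      exact lt_of_le_of_lt (hzS ⟨i, hiu⟩) (hzO ⟨i, hiu⟩ (Set.mem_univ _))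
    exact absurd (hxbmin hxX) (by simpa using hFx)
  obtain ⟨f, c, hfO, hfS⟩ := geometric_hahn_banach_open hOconv hOopen hSconv hdisj
  set lam : ↥u → ℝ := fun i => f fun j => if i = j then 1 else 0 with hlam
  have hfz : ∀ z : ↥u → ℝ, f z = ∑ i, z i * lam i := by
    intro z
    have := LinearMap.pi_apply_eq_sum_univ (f : (↥u → ℝ) →ₗ[ℝ] ℝ) z
    simpa [smul_eq_mul] using this
  set W : ℝ := ∑ i, lam i with hW
  have hconstO : ∀ ε : ℝ, 0 < ε → (fun _ : ↥u => v - ε) ∈ O := by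
    intro ε hε i _
    simpa using by linarith
  have hSne : S.Nonempty := by
    obtain ⟨x0, hx0⟩ := hXne
    exact ⟨fun i => g i x0, x0, hx0, fun i => le_rfl⟩
  have hfconst : ∀ r : ℝ, f (fun _ => r) = r * W := by
    intro r
    rw [hfz, hW, Finset.mul_sum]
  -- each lam i is nonnegative
  have hlamnn : ∀ i, 0 ≤ lam i := by
    intro i0
    by_contra hneg
    push_neg at hneg
    have hbase : f (fun _ : ↥u => v - 1) < c := hfO _ (hconstO 1 one_pos)
    set t : ℝ := (c - (v - 1) * W + 1) / (-lam i0) with ht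
    have htpos : 0 < t := by
      rw [hfconst] at hbase
      apply div_pos (by linarith) (by linarith)
    have hmem : (fun j : ↥u => (v - 1) - (if i0 = j then t else 0)) ∈ O := by
      intro j _
      by_cases h : i0 = j <;> simp [h, Set.mem_Iio] <;> linarith
    have := hfO _ hmem
    rw [hfz] at this
    have hsum : ∑ j, ((v - 1) - (if i0 = j then t else 0)) * lam j
        = (v - 1) * W - t * lam i0 := by
      have heach : ∀ j : ↥u, ((v - 1) - (if i0 = j then t else 0)) * lam j
          = (v - 1) * lam j - (if i0 = j then t * lam j else 0) := by
        intro j; by_cases h : i0 = j <;> simp [h] <;> ring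
      rw [Finset.sum_congr rfl fun j _ => heach j, Finset.sum_sub_distrib,
        Finset.sum_ite_eq, hW, Finset.mul_sum]
      simp
    have hne : lam i0 ≠ 0 := ne_of_lt hneg
    have htl : t * lam i0 = -(c - (v - 1) * W + 1) := by
      rw [ht, div_mul_eq_mul_div, div_eq_iff (neg_ne_zero.mpr hne)]; ring
    rw [hsum, htl] at this
    linarith
  -- W is positive
  have hWnn : 0 ≤ W := Finset.sum_nonneg fun i _ => hlamnn i
  have hWpos : 0 < W := by
    rcases eq_or_lt_of_le hWnn with hW0 | h
    · exfalso
      have hall : ∀ i : ↥u, lam i = 0 := by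
        intro i
        have := (Finset.sum_eq_zero_iff_of_nonneg fun j _ => hlamnn j).mp hW0.symm
        exact this i (Finset.mem_univ i)
      have hf0 : ∀ z : ↥u → ℝ, f z = 0 := by
        intro z; rw [hfz]; simp [hall]
      obtain ⟨z0, hz0⟩ := hSne
      have h1 : (0:ℝ) < c := by simpa [hf0] using hfO _ (hconstO 1 one_pos)
      have h2 : c ≤ 0 := by simpa [hf0] using hfS _ hz0
      linarith
    · exact h
  -- v * W ≤ c
  have hvWc : v * W ≤ c := by
    by_contra hcon
    push_neg at hcon
    set ε : ℝ := (v * W - c) / (2 * W) with hε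
    have hεpos : 0 < ε := div_pos (by linarith) (by linarith)
    have := hfO _ (hconstO ε hεpos)
    rw [hfconst] at this
    have : (v - ε) * W = v * W - (v * W - c) / 2 := by
      rw [hε]; field_simp
    nlinarith [hfO _ (hconstO ε hεpos), hfconst (v - ε)]
  -- build the mixture and contradict
  set μ : ι → ℝ := fun i => if h : i ∈ u then lam ⟨i, h⟩ / W else 0 with hμ
  have hμsum : ∑ i ∈ u, μ i = 1 := by
    rw [← Finset.sum_attach u μ]
    have : ∀ i : ↥u, μ ↑i = lam i / W := by
      intro i; rw [hμ]; simp [i.2]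
    rw [Finset.sum_congr rfl fun i _ => this i, ← Finset.sum_div, ← Finset.univ_eq_attach,
      ← hW, div_self (ne_of_gt hWpos)]
  have hμnn : ∀ i ∈ u, 0 ≤ μ i := by
    intro i hiu; rw [hμ]; simp only [dif_pos hiu]
    exact div_nonneg (hlamnn _) (le_of_lt hWpos)
  obtain ⟨x1, hx1X, hx1⟩ := key μ hμnn hμsum
  have hcf : c ≤ ∑ i : ↥u, g (↑i) x1 * lam i := by
    have : (fun i : ↥u => g (↑i) x1) ∈ S := ⟨x1, hx1X, fun i => le_rfl⟩
    have := hfS _ this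
    rwa [hfz] at this
  have hμg : ∑ i ∈ u, μ i * g i x1 = (∑ i : ↥u, g (↑i) x1 * lam i) / W := by
    rw [← Finset.sum_attach u (fun i => μ i * g i x1), ← Finset.univ_eq_attach,
      Finset.sum_div]
    congr 1
    funext i
    rw [hμ]; simp only [dif_pos i.2]
    ring
  have hvle : v ≤ (∑ i : ↥u, g (↑i) x1 * lam i) / W := by
    rw [le_div_iff₀ hWpos]
    calc v * W ≤ c := hvWc
      _ ≤ _ := hcf
  rw [hμg] at hx1
  linarith


lemma expQuad {z : ℝ} (h : |z| ≤ 1) : Real.exp z ≤ 1 + z + z ^ 2 := by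
  have h2 := Real.exp_bound h (by norm_num : 0 < 2)
  rw [abs_le] at h2
  have := h2.2
  simp [Finset.sum_range_succ] at this
  nlinarith [sq_abs z, sq_nonneg z, abs_nonneg z]

section helpers

variable {N M d : ℕ} {C : ℝ} {X : Set (Euc N)} {Y : Set (Euc M)}
  {ℓ : Euc N → Euc M → Fin d → ℝ}

/-- continuity on X of x ↦ ℓ x y j for fixed y ∈ Y -/
lemma contX (hcont : ∀ j, ContinuousOn (fun p : Euc N × Euc M => ℓ p.1 p.2 j) (X ×ˢ Y))
    {y : Euc M} (hy : y ∈ Y) (j : Fin d) :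
    ContinuousOn (fun x => ℓ x y j) X := by
  have : ContinuousOn ((fun p : Euc N × Euc M => ℓ p.1 p.2 j) ∘ (fun x => (x, y))) X := by
    apply (hcont j).comp (Continuous.continuousOn (by continuity))
    intro x hx
    exact Set.mk_mem_prod hx hy
  exact this

lemma supcont (hd : 1 ≤ d)
    (hcont : ∀ j, ContinuousOn (fun p : Euc N × Euc M => ℓ p.1 p.2 j) (X ×ˢ Y))
    {y : Euc M} (hy : y ∈ Y) :
    ContinuousOn (fun x => ⨆ j, ℓ x y j) X := by
  have hne : Nonempty (Fin d) := Fin.pos_iff_nonempty.mp hd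
  have := continuousOn_finset_sup' (Finset.univ : Finset (Fin d)) Finset.univ_nonempty
    (fun j x => ℓ x y j) (fun j _ => contX hcont hy j)
  apply this.congr
  intro x _
  exact (Finset.sup'_univ_eq_ciSup fun j => ℓ x y j).symm

/-- For `y ∈ Y`, existence of a point of `X` whose loss coordinates are all at most
the AMF value. -/
lemma exists_le_amfValue (hd : 1 ≤ d) (hC : 0 < C)
    (hXcomp : IsCompact X) (hXne : X.Nonempty) (hYne : Y.Nonempty)
    (hcont : ∀ j, ContinuousOn (fun p : Euc N × Euc M => ℓ p.1 p.2 j) (X ×ˢ Y))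
    (hbdd : ∀ j, ∀ x ∈ X, ∀ y ∈ Y, |ℓ x y j| ≤ C)
    {y : Euc M} (hy : y ∈ Y) :
    ∃ x0 ∈ X, ∀ j, ℓ x0 y j ≤ amfValue X Y ℓ := by
  have hne : Nonempty (Fin d) := Fin.pos_iff_nonempty.mp hd
  obtain ⟨x0, hx0X, hx0min⟩ := hXcomp.exists_isMinOn hXne (supcont hd hcont hy)
  refine ⟨x0, hx0X, fun j => ?_⟩
  have h1 : ℓ x0 y j ≤ ⨆ j, ℓ x0 y j :=
    le_ciSup (Set.Finite.bddAbove (Set.finite_range _)) j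
  -- the inner inf is at least F x0 and at most the value
  have h2 : (⨆ j, ℓ x0 y j) ≤ sInf ((fun x => ⨆ j, ℓ x y j) '' X) := by
    apply le_csInf (hXne.image _)
    rintro b ⟨x, hxX, rfl⟩
    exact hx0min hxX
  -- any element of the outer image set is at most C
  have hout : ∀ z ∈ (fun y => sInf ((fun x => ⨆ j, ℓ x y j) '' X)) '' Y, z ≤ C := by
    rintro z ⟨y', hy', rfl⟩
    obtain ⟨xa, hxa⟩ := hXne
    have hbb : BddBelow ((fun x => ⨆ j, ℓ x y' j) '' X) := by
      refine ⟨-C, ?_⟩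
      rintro b ⟨x, hxX, rfl⟩
      calc -C ≤ ℓ x y' ⟨0, hd⟩ := (abs_le.mp (hbdd _ x hxX y' hy')).1
        _ ≤ _ := le_ciSup (Set.Finite.bddAbove (Set.finite_range _)) _
    exact csInf_le_of_le hbb ⟨xa, hxa, rfl⟩
      (ciSup_le fun j => (abs_le.mp (hbdd j xa hxa y' hy')).2)
  have h3 : sInf ((fun x => ⨆ j, ℓ x y j) '' X) ≤ amfValue X Y ℓ := by
    apply le_csSup ⟨C, fun z hz => hout z hz⟩
    exact ⟨y, hy, rfl⟩
  linarith
lemma amfValue_mem_Icc (hd : 1 ≤ d) (hC : 0 < C)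
    (hXcomp : IsCompact X) (hXne : X.Nonempty) (hYne : Y.Nonempty)
    (hbdd : ∀ j, ∀ x ∈ X, ∀ y ∈ Y, |ℓ x y j| ≤ C) :
    amfValue X Y ℓ ∈ Set.Icc (-C) C := by
  have hne : Nonempty (Fin d) := Fin.pos_iff_nonempty.mp hd
  have hout : ∀ z ∈ (fun y => sInf ((fun x => ⨆ j, ℓ x y j) '' X)) '' Y, z ≤ C := by
    rintro z ⟨y', hy', rfl⟩
    obtain ⟨xa, hxa⟩ := hXne
    have hbb : BddBelow ((fun x => ⨆ j, ℓ x y' j) '' X) := by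
      refine ⟨-C, ?_⟩
      rintro b ⟨x, hxX, rfl⟩
      calc -C ≤ ℓ x y' ⟨0, hd⟩ := (abs_le.mp (hbdd _ x hxX y' hy')).1
        _ ≤ _ := le_ciSup (Set.Finite.bddAbove (Set.finite_range _)) _
    exact csInf_le_of_le hbb ⟨xa, hxa, rfl⟩
      (ciSup_le fun j => (abs_le.mp (hbdd j xa hxa y' hy')).2)
  constructor
  · obtain ⟨y0, hy0⟩ := hYne
    have hlb : -C ≤ sInf ((fun x => ⨆ j, ℓ x y0 j) '' X) := by
      apply le_csInf (hXne.image _)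
      rintro b ⟨x, hxX, rfl⟩
      calc -C ≤ ℓ x y0 ⟨0, hd⟩ := (abs_le.mp (hbdd _ x hxX y0 hy0)).1
        _ ≤ _ := le_ciSup (Set.Finite.bddAbove (Set.finite_range _)) _
    calc -C ≤ sInf ((fun x => ⨆ j, ℓ x y0 j) '' X) := hlb
      _ ≤ amfValue X Y ℓ := le_csSup ⟨C, fun z hz => hout z hz⟩ ⟨y0, hy0, rfl⟩
  · exact csSup_le (hYne.image _) hout

/-- **Part (a) core**: existence of a good response for arbitrary nonnegative weights. -/
lemma exists_good_response {N M d : ℕ} (hd : 1 ≤ d) {C : ℝ} (hC : 0 < C)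
    {X : Set (Euc N)} {Y : Set (Euc M)} {ℓ : Euc N → Euc M → Fin d → ℝ}
    (hXconv : Convex ℝ X) (hXcomp : IsCompact X) (hXne : X.Nonempty)
    (hYconv : Convex ℝ Y) (hYne : Y.Nonempty)
    (hcont : ∀ j, ContinuousOn (fun p : Euc N × Euc M => ℓ p.1 p.2 j) (X ×ˢ Y))
    (hbdd : ∀ j, ∀ x ∈ X, ∀ y ∈ Y, |ℓ x y j| ≤ C)
    (hconv : ∀ j, ∀ y ∈ Y, ConvexOn ℝ X fun x => ℓ x y j)
    (hconc : ∀ j, ∀ x ∈ X, ConcaveOn ℝ Y fun y => ℓ x y j)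
    (w : Fin d → ℝ) (hw : ∀ j, 0 ≤ w j) :
    ∃ x ∈ X, ∀ y ∈ Y, ∑ j, w j * (ℓ x y j - amfValue X Y ℓ) ≤ 0 := by
  classical
  set A := amfValue X Y ℓ with hA
  set G : Euc M → Euc N → ℝ := fun y x => ∑ j, w j * (ℓ x y j - A) with hG
  have hGcont : ∀ y ∈ Y, ContinuousOn (G y) X := by
    intro y hy
    have h1 : ∀ j ∈ (Finset.univ : Finset (Fin d)),
        ContinuousOn (fun x => w j * (ℓ x y j - A)) X := fun j _ =>
      continuousOn_const.mul ((contX hcont hy j).sub continuousOn_const)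
    exact continuousOn_finset_sum _ h1
  have hGconv : ∀ y ∈ Y, ConvexOn ℝ X (G y) := by
    intro y hy
    apply convexOn_finset_sum hXconv
    intro j _
    have h1 : ConvexOn ℝ X fun x => ℓ x y j - A :=
      (hconv j y hy).sub (concaveOn_const A hXconv)
    simpa [smul_eq_mul] using h1.smul (hw j)
  -- per-y nonemptiness and the key mixture property
  have hyK : ∀ y ∈ Y, ∃ x0 ∈ X, G y x0 ≤ 0 := by
    intro y hy
    obtain ⟨x0, hx0X, hx0⟩ := exists_le_amfValue hd hC hXcomp hXne hYne hcont hbdd hy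
    refine ⟨x0, hx0X, ?_⟩
    apply Finset.sum_nonpos
    intro j _
    have := hx0 j
    have := hw j
    nlinarith
  set t : ↥Y → Set (Euc N) := fun y => X ∩ (G ↑y) ⁻¹' Set.Iic 0 with ht
  have htc : ∀ y : ↥Y, IsClosed (t y) :=
    fun y => (hGcont ↑y y.2).preimage_isClosed_of_isClosed hXcomp.isClosed isClosed_Iic
  have hster : ∀ u : Finset ↥Y, (X ∩ ⋂ i ∈ u, t i).Nonempty := by
    intro u
    rcases u.eq_empty_or_nonempty with rfl | hu
    · simpa using hXne
    have := sep_minimax u hu hXconv hXcomp hXne (fun i x => G ↑i x)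
      (fun i _ => hGconv ↑i i.coe_prop) (fun i _ => hGcont ↑i i.coe_prop) 0 ?_
    · obtain ⟨x, hxX, hx⟩ := this
      refine ⟨x, hxX, ?_⟩
      simp only [Set.mem_iInter]
      intro i hiu
      exact ⟨hxX, hx i hiu⟩
    · intro μ hμnn hμsum
      set yb : Euc M := ∑ i ∈ u, μ i • (i : Euc M) with hyb
      have hybY : yb ∈ Y := hYconv.sum_mem hμnn hμsum fun i _ => i.coe_prop
      obtain ⟨x0, hx0X, hx0⟩ := exists_le_amfValue hd hC hXcomp hXne hYne hcont hbdd hybY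
      refine ⟨x0, hx0X, ?_⟩
      have hswap : ∑ i ∈ u, μ i * G (↑i) x0
          = ∑ j, w j * ((∑ i ∈ u, μ i * ℓ x0 (↑i) j) - A) := by
        simp only [hG]
        simp only [Finset.mul_sum]
        rw [Finset.sum_comm]
        refine Finset.sum_congr rfl fun j _ => ?_
        have heach : ∀ i ∈ u, μ i * (w j * (ℓ x0 (↑i) j - A))
            = w j * (μ i * ℓ x0 (↑i) j) - μ i * (w j * A) := fun i _ => by ring
        rw [Finset.sum_congr rfl heach, Finset.sum_sub_distrib, ← Finset.mul_sum,
          ← Finset.sum_mul, hμsum]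
        ring
      rw [hswap]
      apply Finset.sum_nonpos
      intro j _
      have hjensen : ∑ i ∈ u, μ i • ℓ x0 (↑i) j ≤ ℓ x0 yb j := by
        have := (hconc j x0 hx0X).le_map_sum hμnn hμsum fun i _ => i.coe_prop
        simpa [hyb] using this
      have h1 : ∑ i ∈ u, μ i * ℓ x0 (↑i) j ≤ A := by
        calc ∑ i ∈ u, μ i * ℓ x0 (↑i) j = ∑ i ∈ u, μ i • ℓ x0 (↑i) j := by
              simp [smul_eq_mul]
          _ ≤ ℓ x0 yb j := hjensen
          _ ≤ A := hx0 j
      have := hw j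
      nlinarith
  obtain ⟨x, hxX, hx⟩ := hXcomp.inter_iInter_nonempty t htc hster
  refine ⟨x, hxX, fun y hy => ?_⟩
  have := Set.mem_iInter.mp hx ⟨y, hy⟩
  exact this.2

end helpers

set_option maxHeartbeats 1000000 in
/-- For any `η ≤ 1/(2C)`: at every round `t`, given any history of play
through round `t−1`, there exists `x^t ∈ X^t` such that for all `y ∈ Y^t`,
`Σ_j exp(η·R^{t−1}_j)·(ℓ^t_j(x^t, y) − w^t_A) ≤ 0`.  Consequently, a Learner playing such
a point at every round guarantees `L^T ≤ d·(4η²C² + 1)^T` against any Adversary. -/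
theorem amf_minimax_step_and_surrogate_bound
    (T d N M : ℕ) (hd : 1 ≤ d) (C : ℝ) (hC : 0 < C)
    (X : Fin T → Set (Euc N)) (Y : Fin T → Set (Euc M))
    (ℓ : Fin T → Euc N → Euc M → Fin d → ℝ)
    (hXconv : ∀ t, Convex ℝ (X t)) (hXcomp : ∀ t, IsCompact (X t))
    (hXne : ∀ t, (X t).Nonempty)
    (hYconv : ∀ t, Convex ℝ (Y t)) (hYcomp : ∀ t, IsCompact (Y t))
    (hYne : ∀ t, (Y t).Nonempty)
    (hcont : ∀ t j, ContinuousOn (fun p : Euc N × Euc M => ℓ t p.1 p.2 j) (X t ×ˢ Y t))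
    (hbdd : ∀ t j, ∀ x ∈ X t, ∀ y ∈ Y t, |ℓ t x y j| ≤ C)
    (hconv : ∀ t j, ∀ y ∈ Y t, ConvexOn ℝ (X t) (fun x => ℓ t x y j))
    (hconc : ∀ t j, ∀ x ∈ X t, ConcaveOn ℝ (Y t) (fun y => ℓ t x y j))
    (η : ℝ) (hη : η ∈ Set.Ioo (0 : ℝ) 1) (hηC : η ≤ 1 / (2 * C)) :
    -- (a) the minimax step: a good response exists at every round, for every history
    (∀ t : Fin T, ∀ (x : Fin T → Euc N) (y : Fin T → Euc M),
      (∀ s, x s ∈ X s) → (∀ s, y s ∈ Y s) →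
      ∃ xt ∈ X t, ∀ yt ∈ Y t,
        ∑ j : Fin d, Real.exp (η * amfRegret X Y ℓ x y (Finset.Iio t) j) *
          (ℓ t xt yt j - amfValue (X t) (Y t) (ℓ t)) ≤ 0) ∧
    -- (b) any Learner playing such points at every round bounds the final surrogate loss
    (∀ (x : Fin T → Euc N) (y : Fin T → Euc M),
      (∀ s, x s ∈ X s) → (∀ s, y s ∈ Y s) →
      (∀ t : Fin T, ∀ yt ∈ Y t,
        ∑ j : Fin d, Real.exp (η * amfRegret X Y ℓ x y (Finset.Iio t) j) *
          (ℓ t (x t) yt j - amfValue (X t) (Y t) (ℓ t)) ≤ 0) →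
      ∑ j : Fin d, Real.exp (η * amfRegret X Y ℓ x y Finset.univ j) ≤
        d * (4 * η ^ 2 * C ^ 2 + 1) ^ T) := by
  constructor
  · intro t x y hx hy
    exact exists_good_response hd hC (hXconv t) (hXcomp t) (hXne t) (hYconv t) (hYne t)
      (hcont t) (hbdd t) (hconv t) (hconc t)
      (fun j => Real.exp (η * amfRegret X Y ℓ x y (Finset.Iio t) j))
      (fun j => (Real.exp_pos _).le)
  · intro x y hx hy hstep
    have hη0 : 0 < η := hη.1
    have hd' : (1 : ℝ) ≤ d := by exact_mod_cast hd
    set B : ℝ := 4 * η ^ 2 * C ^ 2 + 1 with hB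
    have hB1 : (1 : ℝ) ≤ B := by rw [hB]; nlinarith
    have hAmem : ∀ t : Fin T, amfValue (X t) (Y t) (ℓ t) ∈ Set.Icc (-C) C := fun t =>
      amfValue_mem_Icc hd hC (hXcomp t) (hXne t) (hYne t) (hbdd t)
    set Sn : ℕ → Finset (Fin T) := fun n => Finset.univ.filter (fun s => (s : ℕ) < n) with hSn
    have main : ∀ n, n ≤ T →
        ∑ j, Real.exp (η * amfRegret X Y ℓ x y (Sn n) j) ≤ d * B ^ n := by
      intro n
      induction n with
      | zero =>
          intro _
          have hS0 : Sn 0 = ∅ := by simp [hSn]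
          simp [hS0, amfRegret]
      | succ n ih =>
          intro hn
          have hnT : n < T := hn
          set t : Fin T := ⟨n, hnT⟩ with hts
          have hIio : Finset.Iio t = Sn n := by
            ext s
            simp [hSn, Finset.mem_Iio, Fin.lt_def, hts]
          have htS : t ∉ Sn n := by simp [hSn, hts]
          have hins : Sn (n + 1) = insert t (Sn n) := by
            ext s
            simp only [hSn, Finset.mem_filter, Finset.mem_univ, true_and,
              Finset.mem_insert, Nat.lt_succ_iff_lt_or_eq, hts, Fin.ext_iff]
            omega
          set A : ℝ := amfValue (X t) (Y t) (ℓ t) with hAt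
          set δ : Fin d → ℝ := fun j => ℓ t (x t) (y t) j - A with hδ
          set E : Fin d → ℝ := fun j => Real.exp (η * amfRegret X Y ℓ x y (Sn n) j) with hE
          have hreg : ∀ j, amfRegret X Y ℓ x y (Sn (n + 1)) j =
              amfRegret X Y ℓ x y (Sn n) j + δ j := by
            intro j
            simp only [amfRegret, hins, Finset.sum_insert htS, hδ, hAt]
            ring
          have hδb : ∀ j, |δ j| ≤ 2 * C := by
            intro j
            have h1 := abs_le.mp (hbdd t j (x t) (hx t) (y t) (hy t))
            have h2 := hAmem t
            rw [Set.mem_Icc] at h2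
            rw [hδ, abs_le]
            constructor <;> simp <;> linarith [h1.1, h1.2, h2.1, h2.2]
          have hzb : ∀ j, |η * δ j| ≤ 1 := by
            intro j
            rw [abs_mul, abs_of_pos hη0]
            have h2C : (0:ℝ) < 2 * C := by linarith
            have := (le_div_iff₀ h2C).mp hηC
            nlinarith [hδb j, abs_nonneg (δ j)]
          have hkey : ∀ j, Real.exp (η * amfRegret X Y ℓ x y (Sn (n + 1)) j) ≤
              E j * (1 + η * δ j + (η * δ j) ^ 2) := by
            intro j
            rw [hreg j, mul_add, Real.exp_add]
            exact mul_le_mul_of_nonneg_left (expQuad (hzb j)) (Real.exp_pos _).le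
          have hmid : ∑ j, E j * δ j ≤ 0 := by
            have := hstep t (y t) (hy t)
            rw [hIio] at this
            simpa [hE, hδ, hAt] using this
          have hEpos : ∀ j, 0 < E j := fun j => Real.exp_pos _
          calc ∑ j, Real.exp (η * amfRegret X Y ℓ x y (Sn (n + 1)) j)
              ≤ ∑ j, E j * (1 + η * δ j + (η * δ j) ^ 2) :=
                Finset.sum_le_sum fun j _ => hkey j
            _ = (∑ j, E j) + η * (∑ j, E j * δ j) + ∑ j, E j * (η * δ j) ^ 2 := by
                rw [Finset.mul_sum, ← Finset.sum_add_distrib, ← Finset.sum_add_distrib]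
                refine Finset.sum_congr rfl fun j _ => ?_
                ring
            _ ≤ (∑ j, E j) + 0 + ∑ j, E j * (4 * η ^ 2 * C ^ 2) := by
                have hm : η * (∑ j, E j * δ j) ≤ 0 :=
                  mul_nonpos_of_nonneg_of_nonpos hη0.le hmid
                have hq : ∀ j, E j * (η * δ j) ^ 2 ≤ E j * (4 * η ^ 2 * C ^ 2) := by
                  intro j
                  apply mul_le_mul_of_nonneg_left _ (hEpos j).le
                  have habs := abs_le.mp (hδb j)
                  have h1 : δ j ^ 2 ≤ (2 * C) ^ 2 := sq_le_sq' (by linarith) (by linarith)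
                  nlinarith [mul_le_mul_of_nonneg_left h1 (sq_nonneg η)]
                have := Finset.sum_le_sum fun j (_ : j ∈ Finset.univ) => hq j
                linarith
            _ = B * ∑ j, E j := by
                rw [← Finset.sum_mul, hB]
                ring
            _ ≤ B * (d * B ^ n) := by
                apply mul_le_mul_of_nonneg_left (ih (le_of_lt hnT)) (by linarith)
            _ = d * B ^ (n + 1) := by ring
    have hST : Sn T = Finset.univ := by
      ext s
      simp [hSn, s.isLt]
    have := main T le_rfl
    rw [hST] at this
    exact this


end
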